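/- Let 1 < m₁ ≤ m₂ and let g : ℂ → ℂ, viewed as a map from ℝ² to ℝ², be continuously (real-)differentiable on ℂ and twice continuously differentiable on ℂ∖{0}, with g(0) = 0, Dg(0) = 0, and ‖D²g(u)‖ ≤ K(|u|^{m₁−2} + |u|^{m₂−2}) for all u ≠ 0 and some constant K ≥ 0. Define, for φ, ε ∈ ℂ, the Taylor remainder 𝒩(φ, ε) = g(φ + ε) − g(φ) − Dg(φ)ε, where Dg(φ)ε denotes the real Fréchet derivative of g at φ applied to ε. Then there exists a constant C = C(K, m₁, m₂) such that for all φ, ε ∈ ℂ: |𝒩(φ, ε)| ≤ C( A₁|φ|^{m₁−2}|ε|² + A₂|φ|^{m₂−2}|ε|² + |ε|^{m₁} + |ε|^{m₂} ), where A_j = 1 if m_j > 2 and A_j = 0 if m_j ≤ 2. -/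

import Mathlib

open Filter Topology

/-- At a nonzero point, the derivative map of `g` is differentiable, and the norm of its
derivative equals the norm of the second iterated derivative of `g`. -/
lemma aux_fderiv2 {g : ℂ → ℂ} (hg2 : ContDiffOn ℝ 2 g {(0 : ℂ)}ᶜ) {z : ℂ} (hz : z ≠ 0) :
    DifferentiableAt ℝ (fderiv ℝ g) z ∧
      ‖fderiv ℝ (fderiv ℝ g) z‖ = ‖iteratedFDeriv ℝ 2 g z‖ := by
  have hz' : ContDiffAt ℝ 2 g z := hg2.contDiffAt (isOpen_compl_singleton.mem_nhds hz)
  have h1 : ContDiffAt ℝ 1 (fderiv ℝ g) z := hz'.fderiv_right (by norm_num)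
  refine ⟨h1.differentiableAt one_ne_zero, ?_⟩
  have e1 : ‖iteratedFDeriv ℝ 1 (fderiv ℝ g) z‖ = ‖iteratedFDeriv ℝ 2 g z‖ :=
    norm_iteratedFDeriv_fderiv
  have e2 : ‖iteratedFDeriv ℝ 0 (fderiv ℝ (fderiv ℝ g)) z‖ =
      ‖iteratedFDeriv ℝ 1 (fderiv ℝ g) z‖ := norm_iteratedFDeriv_fderiv
  rw [norm_iteratedFDeriv_zero] at e2
  rw [← e1, ← e2]

/-- One dyadic step: the variation of `fderiv g` between `u` and `u/2`. -/
lemma aux_step {m₁ m₂ K : ℝ} (hm₁ : 1 < m₁) (hm₂ : 1 < m₂) (hK : 0 ≤ K)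
    {g : ℂ → ℂ} (hg2 : ContDiffOn ℝ 2 g {(0 : ℂ)}ᶜ)
    (hD2 : ∀ u : ℂ, u ≠ 0 →
      ‖iteratedFDeriv ℝ 2 g u‖ ≤ K * (‖u‖ ^ (m₁ - 2) + ‖u‖ ^ (m₂ - 2)))
    (u : ℂ) (hu : u ≠ 0) :
    ‖fderiv ℝ g u - fderiv ℝ g ((2:ℝ)⁻¹ • u)‖ ≤ K * (‖u‖ ^ (m₁ - 1) + ‖u‖ ^ (m₂ - 1)) := by
  have hu0 : 0 < ‖u‖ := norm_pos_iff.mpr hu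
  set s := segment ℝ ((2:ℝ)⁻¹ • u) u with hs
  have hchar : ∀ z ∈ s, ∃ c : ℝ, (2:ℝ)⁻¹ ≤ c ∧ c ≤ 1 ∧ z = c • u := by
    rintro z ⟨a, b, ha, hb, hab, rfl⟩
    exact ⟨a * 2⁻¹ + b, by norm_num; linarith, by norm_num; linarith,
      by rw [smul_smul, ← add_smul]⟩
  -- norm bounds on the segment
  have hbound : ∀ z ∈ s, ‖fderiv ℝ (fderiv ℝ g) z‖ ≤
      K * (2 * ‖u‖ ^ (m₁ - 2) + 2 * ‖u‖ ^ (m₂ - 2)) := by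
    intro z hzs
    obtain ⟨c, hc1, hc2, rfl⟩ := hchar z hzs
    have hc0 : 0 < c := by norm_num at hc1 ⊢; linarith
    have hz0 : c • u ≠ 0 := smul_ne_zero (ne_of_gt hc0) hu
    have hzn : ‖c • u‖ = c * ‖u‖ := by
      rw [norm_smul, Real.norm_eq_abs, abs_of_pos hc0]
    have key : ∀ m : ℝ, 1 < m → ‖c • u‖ ^ (m - 2) ≤ 2 * ‖u‖ ^ (m - 2) := by
      intro m hm
      rcases le_or_gt 2 m with h2 | h2
      · have h1 : ‖c • u‖ ≤ ‖u‖ := by rw [hzn]; nlinarith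
        have := Real.rpow_le_rpow (norm_nonneg _) h1 (by linarith : (0:ℝ) ≤ m - 2)
        nlinarith [Real.rpow_nonneg (norm_nonneg u) (m - 2)]
      · have hhalf : 2⁻¹ * ‖u‖ ≤ ‖c • u‖ := by rw [hzn]; nlinarith
        have h1 : ‖c • u‖ ^ (m - 2) ≤ (2⁻¹ * ‖u‖) ^ (m - 2) :=
          Real.rpow_le_rpow_of_nonpos (by positivity) hhalf (by linarith)
        have h2' : ((2:ℝ)⁻¹ * ‖u‖) ^ (m - 2) = (2:ℝ)⁻¹ ^ (m - 2) * ‖u‖ ^ (m - 2) :=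
          Real.mul_rpow (by norm_num) (norm_nonneg u)
        have h3 : ((2:ℝ)⁻¹) ^ (m - 2) ≤ ((2:ℝ)⁻¹) ^ (-1 : ℝ) :=
          Real.rpow_le_rpow_of_exponent_ge (by norm_num) (by norm_num) (by linarith)
        have h4 : ((2:ℝ)⁻¹) ^ (-1 : ℝ) = 2 := by
          rw [Real.rpow_neg_one]; norm_num
        have h5 : (0:ℝ) ≤ ‖u‖ ^ (m - 2) := Real.rpow_nonneg (norm_nonneg u) _
        nlinarith
    have hnorm := (aux_fderiv2 hg2 hz0).2
    rw [hnorm]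
    refine (hD2 _ hz0).trans ?_
    have := add_le_add (key m₁ hm₁) (key m₂ hm₂)
    nlinarith
  have hdiff : ∀ z ∈ s, DifferentiableAt ℝ (fderiv ℝ g) z := by
    intro z hzs
    obtain ⟨c, hc1, hc2, rfl⟩ := hchar z hzs
    have hc0 : 0 < c := by norm_num at hc1 ⊢; linarith
    exact (aux_fderiv2 hg2 (smul_ne_zero (ne_of_gt hc0) hu)).1
  have hmvt := (convex_segment ((2:ℝ)⁻¹ • u) u).norm_image_sub_le_of_norm_fderiv_le
    hdiff hbound (left_mem_segment ℝ _ _) (right_mem_segment ℝ _ _)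
  have hdist : ‖u - (2:ℝ)⁻¹ • u‖ = 2⁻¹ * ‖u‖ := by
    have : u - (2:ℝ)⁻¹ • u = (2:ℝ)⁻¹ • u := by
      rw [sub_eq_iff_eq_add, ← add_smul]; norm_num
    rw [this, norm_smul, Real.norm_eq_abs]; norm_num
  rw [hdist] at hmvt
  have hpow : ∀ m : ℝ, ‖u‖ ^ (m - 2) * ‖u‖ = ‖u‖ ^ (m - 1) := by
    intro m
    rw [show m - 1 = (m - 2) + 1 by ring, Real.rpow_add hu0, Real.rpow_one]
  refine hmvt.trans ?_
  rw [show K * (2 * ‖u‖ ^ (m₁ - 2) + 2 * ‖u‖ ^ (m₂ - 2)) * (2⁻¹ * ‖u‖)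
      = K * (‖u‖ ^ (m₁ - 2) * ‖u‖ + ‖u‖ ^ (m₂ - 2) * ‖u‖) by ring,
    hpow m₁, hpow m₂]

/-- Bound on the first derivative: `‖Dg(u)‖ ≲ |u|^{m₁-1} + |u|^{m₂-1}`. -/
lemma aux_Dbound {m₁ m₂ K : ℝ} (hm₁ : 1 < m₁) (hm₂ : 1 < m₂) (hK : 0 ≤ K)
    {g : ℂ → ℂ} (hg1 : ContDiff ℝ 1 g) (hg2 : ContDiffOn ℝ 2 g {(0 : ℂ)}ᶜ)
    (hDg0 : fderiv ℝ g 0 = 0)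
    (hD2 : ∀ u : ℂ, u ≠ 0 →
      ‖iteratedFDeriv ℝ 2 g u‖ ≤ K * (‖u‖ ^ (m₁ - 2) + ‖u‖ ^ (m₂ - 2))) :
    ∃ K' : ℝ, 0 ≤ K' ∧
      ∀ u : ℂ, ‖fderiv ℝ g u‖ ≤ K' * (‖u‖ ^ (m₁ - 1) + ‖u‖ ^ (m₂ - 1)) := by
  set r₁ : ℝ := ((2:ℝ)⁻¹) ^ (m₁ - 1) with hr₁def
  set r₂ : ℝ := ((2:ℝ)⁻¹) ^ (m₂ - 1) with hr₂def
  have hr₁0 : 0 < r₁ := Real.rpow_pos_of_pos (by norm_num) _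
  have hr₂0 : 0 < r₂ := Real.rpow_pos_of_pos (by norm_num) _
  have hr₁1 : r₁ < 1 := Real.rpow_lt_one (by norm_num) (by norm_num) (by linarith)
  have hr₂1 : r₂ < 1 := Real.rpow_lt_one (by norm_num) (by norm_num) (by linarith)
  have hKnn : 0 ≤ K * ((1 - r₁)⁻¹ + (1 - r₂)⁻¹) :=
    mul_nonneg hK (add_nonneg (inv_nonneg.mpr (by linarith)) (inv_nonneg.mpr (by linarith)))
  refine ⟨K * ((1 - r₁)⁻¹ + (1 - r₂)⁻¹), hKnn, ?_⟩
  intro u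
  rcases eq_or_ne u 0 with rfl | hu
  · rw [hDg0]
    simp only [norm_zero, norm_zero]
    exact mul_nonneg hKnn (add_nonneg (Real.rpow_nonneg le_rfl _)
      (Real.rpow_nonneg le_rfl _))
  have hu0 : 0 < ‖u‖ := norm_pos_iff.mpr hu
  set a : ℝ := ‖u‖ ^ (m₁ - 1) with hadef
  set b : ℝ := ‖u‖ ^ (m₂ - 1) with hbdef
  have ha0 : 0 ≤ a := Real.rpow_nonneg (norm_nonneg u) _
  have hb0 : 0 ≤ b := Real.rpow_nonneg (norm_nonneg u) _
  have hP : ∀ n : ℕ, ‖fderiv ℝ g u‖ ≤ ‖fderiv ℝ g (((2:ℝ)⁻¹) ^ n • u)‖ +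
      K * ((∑ k ∈ Finset.range n, r₁ ^ k) * a + (∑ k ∈ Finset.range n, r₂ ^ k) * b) := by
    intro n
    induction n with
    | zero => simp
    | succ n ih =>
      have hun : ((2:ℝ)⁻¹) ^ n • u ≠ 0 := smul_ne_zero (by positivity) hu
      have hstep := aux_step hm₁ hm₂ hK hg2 hD2 (((2:ℝ)⁻¹) ^ n • u) hun
      rw [smul_smul, show (2:ℝ)⁻¹ * ((2:ℝ)⁻¹) ^ n = ((2:ℝ)⁻¹) ^ (n + 1) by
        rw [pow_succ]; ring] at hstep
      have hnu : ‖((2:ℝ)⁻¹) ^ n • u‖ = ((2:ℝ)⁻¹) ^ n * ‖u‖ := by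
        rw [norm_smul, Real.norm_eq_abs, abs_of_pos (by positivity)]
      have hp : ∀ m : ℝ, (((2:ℝ)⁻¹) ^ n * ‖u‖) ^ (m - 1)
          = (((2:ℝ)⁻¹) ^ (m - 1)) ^ n * ‖u‖ ^ (m - 1) := by
        intro m
        rw [Real.mul_rpow (by positivity) (norm_nonneg u)]
        congr 1
        rw [← Real.rpow_natCast ((2:ℝ)⁻¹) n, ← Real.rpow_mul (by norm_num),
          mul_comm, Real.rpow_mul (by norm_num), Real.rpow_natCast]
      rw [hnu, hp m₁, hp m₂, ← hr₁def, ← hr₂def, ← hadef, ← hbdef] at hstep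
      have tri : ‖fderiv ℝ g (((2:ℝ)⁻¹) ^ n • u)‖ ≤
          ‖fderiv ℝ g (((2:ℝ)⁻¹) ^ (n + 1) • u)‖ +
          ‖fderiv ℝ g (((2:ℝ)⁻¹) ^ n • u) - fderiv ℝ g (((2:ℝ)⁻¹) ^ (n + 1) • u)‖ :=
        norm_le_norm_add_norm_sub' _ _
      calc ‖fderiv ℝ g u‖ ≤ ‖fderiv ℝ g (((2:ℝ)⁻¹) ^ n • u)‖ +
            K * ((∑ k ∈ Finset.range n, r₁ ^ k) * a + (∑ k ∈ Finset.range n, r₂ ^ k) * b) := ih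
        _ ≤ (‖fderiv ℝ g (((2:ℝ)⁻¹) ^ (n + 1) • u)‖ + K * (r₁ ^ n * a + r₂ ^ n * b)) +
            K * ((∑ k ∈ Finset.range n, r₁ ^ k) * a + (∑ k ∈ Finset.range n, r₂ ^ k) * b) := by
            have := tri.trans (by linarith [hstep] :
              ‖fderiv ℝ g (((2:ℝ)⁻¹) ^ (n + 1) • u)‖ +
              ‖fderiv ℝ g (((2:ℝ)⁻¹) ^ n • u) - fderiv ℝ g (((2:ℝ)⁻¹) ^ (n + 1) • u)‖ ≤
              ‖fderiv ℝ g (((2:ℝ)⁻¹) ^ (n + 1) • u)‖ + K * (r₁ ^ n * a + r₂ ^ n * b))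
            linarith
        _ = ‖fderiv ℝ g (((2:ℝ)⁻¹) ^ (n + 1) • u)‖ +
            K * ((∑ k ∈ Finset.range (n + 1), r₁ ^ k) * a +
                 (∑ k ∈ Finset.range (n + 1), r₂ ^ k) * b) := by
            rw [Finset.sum_range_succ, Finset.sum_range_succ]; ring
  have hgeom : ∀ r : ℝ, 0 < r → r < 1 → ∀ n : ℕ,
      (∑ k ∈ Finset.range n, r ^ k) ≤ (1 - r)⁻¹ := by
    intro r h0 h1 n
    rw [geom_sum_eq (ne_of_lt h1) n, div_le_iff_of_neg (by linarith : r - 1 < 0)]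
    have he : (1 - r)⁻¹ * (r - 1) = -1 := by
      field_simp
      rw [div_eq_iff (ne_of_gt (by linarith : (0:ℝ) < 1 - r))]
      ring
    nlinarith [pow_nonneg h0.le n]
  have hQ : ∀ n : ℕ, ‖fderiv ℝ g u‖ ≤ ‖fderiv ℝ g (((2:ℝ)⁻¹) ^ n • u)‖ +
      K * ((1 - r₁)⁻¹ * a + (1 - r₂)⁻¹ * b) := by
    intro n
    refine (hP n).trans ?_
    have h1 := hgeom r₁ hr₁0 hr₁1 n
    have h2 := hgeom r₂ hr₂0 hr₂1 n
    have := add_le_add (mul_le_mul_of_nonneg_right h1 ha0) (mul_le_mul_of_nonneg_right h2 hb0)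
    nlinarith
  have hlim : Tendsto (fun n : ℕ => ‖fderiv ℝ g (((2:ℝ)⁻¹) ^ n • u)‖) atTop (𝓝 0) := by
    have h1 : Tendsto (fun n : ℕ => ((2:ℝ)⁻¹) ^ n) atTop (𝓝 0) :=
      tendsto_pow_atTop_nhds_zero_of_lt_one (by norm_num) (by norm_num)
    have h2 : Tendsto (fun n : ℕ => ((2:ℝ)⁻¹) ^ n • u) atTop (𝓝 ((0:ℝ) • u)) :=
      h1.smul_const u
    rw [zero_smul] at h2
    have h3 := ((hg1.continuous_fderiv one_ne_zero).tendsto 0).comp h2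
    rw [hDg0] at h3
    simpa using h3.norm
  have hfin : ‖fderiv ℝ g u‖ ≤ 0 + K * ((1 - r₁)⁻¹ * a + (1 - r₂)⁻¹ * b) :=
    ge_of_tendsto' (hlim.add tendsto_const_nhds) hQ
  have h1r₁ : 0 ≤ (1 - r₁)⁻¹ := inv_nonneg.mpr (by linarith)
  have h1r₂ : 0 ≤ (1 - r₂)⁻¹ := inv_nonneg.mpr (by linarith)
  nlinarith [mul_nonneg h1r₁ hb0, mul_nonneg h1r₂ ha0, mul_nonneg hK
    (add_nonneg (mul_nonneg h1r₁ hb0) (mul_nonneg h1r₂ ha0))]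

set_option maxHeartbeats 1600000 in
/-- Pointwise estimate (Eqn-NonlinConseq) on the Taylor remainder
`𝒩(φ, ε) = g(φ+ε) − g(φ) − Dg(φ)ε` of a nonlinearity `g` satisfying the subcriticality
assumption `‖D²g(u)‖ ≤ K(|u|^{m₁−2} + |u|^{m₂−2})` for `u ≠ 0`, with `1 < m₁ ≤ m₂`. -/
theorem stmt4 (m₁ m₂ : ℝ) (hm₁ : 1 < m₁) (hm₁₂ : m₁ ≤ m₂) (K : ℝ) (hK : 0 ≤ K)
    (g : ℂ → ℂ) (hg1 : ContDiff ℝ 1 g) (hg2 : ContDiffOn ℝ 2 g {(0 : ℂ)}ᶜ)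
    (hg0 : g 0 = 0) (hDg0 : fderiv ℝ g 0 = 0)
    (hD2 : ∀ u : ℂ, u ≠ 0 →
      ‖iteratedFDeriv ℝ 2 g u‖ ≤ K * (‖u‖ ^ (m₁ - 2) + ‖u‖ ^ (m₂ - 2))) :
    ∃ C : ℝ, ∀ φ ε : ℂ,
      ‖g (φ + ε) - g φ - fderiv ℝ g φ ε‖ ≤
        C * ((if 2 < m₁ then ‖φ‖ ^ (m₁ - 2) * ‖ε‖ ^ (2 : ℝ) else 0)
            + (if 2 < m₂ then ‖φ‖ ^ (m₂ - 2) * ‖ε‖ ^ (2 : ℝ) else 0)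
            + ‖ε‖ ^ m₁ + ‖ε‖ ^ m₂) := by
  have hm₂ : 1 < m₂ := lt_of_lt_of_le hm₁ hm₁₂
  obtain ⟨K', hK'0, hK'⟩ := aux_Dbound hm₁ hm₂ hK hg1 hg2 hDg0 hD2
  have h5 : (0:ℝ) ≤ (5:ℝ) ^ m₂ := Real.rpow_nonneg (by norm_num) _
  have h2p : (0:ℝ) ≤ (2:ℝ) ^ m₂ := Real.rpow_nonneg (by norm_num) _
  refine ⟨2 * K' * (5:ℝ) ^ m₂ + 2 * K * (2:ℝ) ^ m₂, ?_⟩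
  intro φ ε
  set R : ℝ := (if 2 < m₁ then ‖φ‖ ^ (m₁ - 2) * ‖ε‖ ^ (2 : ℝ) else 0)
      + (if 2 < m₂ then ‖φ‖ ^ (m₂ - 2) * ‖ε‖ ^ (2 : ℝ) else 0)
      + ‖ε‖ ^ m₁ + ‖ε‖ ^ m₂ with hRdef
  have hif₁ : (0:ℝ) ≤ (if 2 < m₁ then ‖φ‖ ^ (m₁ - 2) * ‖ε‖ ^ (2 : ℝ) else 0) := by
    split_ifs <;> positivity
  have hif₂ : (0:ℝ) ≤ (if 2 < m₂ then ‖φ‖ ^ (m₂ - 2) * ‖ε‖ ^ (2 : ℝ) else 0) := by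
    split_ifs <;> positivity
  have hem₁ : (0:ℝ) ≤ ‖ε‖ ^ m₁ := Real.rpow_nonneg (norm_nonneg ε) _
  have hem₂ : (0:ℝ) ≤ ‖ε‖ ^ m₂ := Real.rpow_nonneg (norm_nonneg ε) _
  have hR0 : 0 ≤ R := by rw [hRdef]; linarith
  rcases eq_or_ne ε 0 with rfl | hε
  · have h1 : g (φ + 0) - g φ - fderiv ℝ g φ 0 = 0 := by simp
    rw [h1, norm_zero]
    positivity
  have hε0 : 0 < ‖ε‖ := norm_pos_iff.mpr hε
  rcases le_or_gt ‖φ‖ (4 * ‖ε‖) with hcase | hcase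
  · -- Case A : ‖φ‖ ≤ 4‖ε‖
    have hsA : ∀ z ∈ segment ℝ φ (φ + ε),
        ‖fderiv ℝ g z‖ ≤ K' * ((5 * ‖ε‖) ^ (m₁ - 1) + (5 * ‖ε‖) ^ (m₂ - 1)) := by
      intro z hz
      have hzb : ‖z‖ ≤ 5 * ‖ε‖ := by
        obtain ⟨p, q, hp, hq, hpq, rfl⟩ := hz
        have h1 : ‖p • φ + q • (φ + ε)‖ ≤ p * ‖φ‖ + q * ‖φ + ε‖ := by
          refine (norm_add_le _ _).trans ?_
          rw [norm_smul, norm_smul, Real.norm_eq_abs, Real.norm_eq_abs,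
            abs_of_nonneg hp, abs_of_nonneg hq]
        have h2 : ‖φ + ε‖ ≤ ‖φ‖ + ‖ε‖ := norm_add_le _ _
        nlinarith
      refine (hK' z).trans ?_
      have b1 : ‖z‖ ^ (m₁ - 1) ≤ (5 * ‖ε‖) ^ (m₁ - 1) :=
        Real.rpow_le_rpow (norm_nonneg z) hzb (by linarith)
      have b2 : ‖z‖ ^ (m₂ - 1) ≤ (5 * ‖ε‖) ^ (m₂ - 1) :=
        Real.rpow_le_rpow (norm_nonneg z) hzb (by linarith)
      exact mul_le_mul_of_nonneg_left (add_le_add b1 b2) hK'0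
    have hgdiff := (convex_segment φ (φ + ε)).norm_image_sub_le_of_norm_fderiv_le
      (fun z _ => hg1.differentiable one_ne_zero z) hsA
      (left_mem_segment ℝ φ (φ + ε)) (right_mem_segment ℝ φ (φ + ε))
    rw [add_sub_cancel_left] at hgdiff
    have hop : ‖fderiv ℝ g φ ε‖ ≤ ‖fderiv ℝ g φ‖ * ‖ε‖ :=
      ContinuousLinearMap.le_opNorm _ _
    have hfφ : ‖fderiv ℝ g φ‖ ≤ K' * ((4 * ‖ε‖) ^ (m₁ - 1) + (4 * ‖ε‖) ^ (m₂ - 1)) := by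
      refine (hK' φ).trans ?_
      have b1 : ‖φ‖ ^ (m₁ - 1) ≤ (4 * ‖ε‖) ^ (m₁ - 1) :=
        Real.rpow_le_rpow (norm_nonneg φ) hcase (by linarith)
      have b2 : ‖φ‖ ^ (m₂ - 1) ≤ (4 * ‖ε‖) ^ (m₂ - 1) :=
        Real.rpow_le_rpow (norm_nonneg φ) hcase (by linarith)
      exact mul_le_mul_of_nonneg_left (add_le_add b1 b2) hK'0
    have htri : ‖g (φ + ε) - g φ - fderiv ℝ g φ ε‖ ≤
        ‖g (φ + ε) - g φ‖ + ‖fderiv ℝ g φ ε‖ := norm_sub_le _ _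
    -- arithmetic keys
    have keyc : ∀ c : ℝ, 0 < c → c ≤ 5 → ∀ m : ℝ, 1 < m → m ≤ m₂ →
        (c * ‖ε‖) ^ (m - 1) * ‖ε‖ ≤ (5:ℝ) ^ m₂ * ‖ε‖ ^ m := by
      intro c hc hc5 m hm hmm
      rw [Real.mul_rpow hc.le (norm_nonneg ε)]
      have e1 : ‖ε‖ ^ (m - 1) * ‖ε‖ = ‖ε‖ ^ m := by
        rw [show m = (m - 1) + 1 by ring, Real.rpow_add hε0, Real.rpow_one]
        ring_nf
      have e2 : c ^ (m - 1) ≤ (5:ℝ) ^ m₂ := by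
        calc c ^ (m - 1) ≤ (5:ℝ) ^ (m - 1) :=
              Real.rpow_le_rpow hc.le hc5 (by linarith)
          _ ≤ (5:ℝ) ^ m₂ :=
              Real.rpow_le_rpow_of_exponent_le (by norm_num) (by linarith)
      calc c ^ (m - 1) * ‖ε‖ ^ (m - 1) * ‖ε‖ = c ^ (m - 1) * (‖ε‖ ^ (m - 1) * ‖ε‖) := by ring
        _ = c ^ (m - 1) * ‖ε‖ ^ m := by rw [e1]
        _ ≤ (5:ℝ) ^ m₂ * ‖ε‖ ^ m := by
            have h := Real.rpow_nonneg (le_of_lt (lt_of_lt_of_le hε0 le_rfl)) m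
            exact mul_le_mul_of_nonneg_right e2 (Real.rpow_nonneg (norm_nonneg ε) m)
    have k51 := keyc 5 (by norm_num) (by norm_num) m₁ hm₁ hm₁₂
    have k52 := keyc 5 (by norm_num) (by norm_num) m₂ hm₂ le_rfl
    have k41 := keyc 4 (by norm_num) (by norm_num) m₁ hm₁ hm₁₂
    have k42 := keyc 4 (by norm_num) (by norm_num) m₂ hm₂ le_rfl
    -- combine everything
    have step1 : ‖g (φ + ε) - g φ‖ ≤ K' * ((5:ℝ) ^ m₂ * ‖ε‖ ^ m₁ + (5:ℝ) ^ m₂ * ‖ε‖ ^ m₂) := by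
      refine hgdiff.trans ?_
      have expand : K' * ((5 * ‖ε‖) ^ (m₁ - 1) + (5 * ‖ε‖) ^ (m₂ - 1)) * ‖ε‖
          = K' * ((5 * ‖ε‖) ^ (m₁ - 1) * ‖ε‖ + (5 * ‖ε‖) ^ (m₂ - 1) * ‖ε‖) := by ring
      rw [expand]
      exact mul_le_mul_of_nonneg_left (add_le_add k51 k52) hK'0
    have step2 : ‖fderiv ℝ g φ ε‖ ≤ K' * ((5:ℝ) ^ m₂ * ‖ε‖ ^ m₁ + (5:ℝ) ^ m₂ * ‖ε‖ ^ m₂) := by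
      refine hop.trans ?_
      have := mul_le_mul_of_nonneg_right hfφ hε0.le
      refine this.trans ?_
      have expand : K' * ((4 * ‖ε‖) ^ (m₁ - 1) + (4 * ‖ε‖) ^ (m₂ - 1)) * ‖ε‖
          = K' * ((4 * ‖ε‖) ^ (m₁ - 1) * ‖ε‖ + (4 * ‖ε‖) ^ (m₂ - 1) * ‖ε‖) := by ring
      rw [expand]
      exact mul_le_mul_of_nonneg_left (add_le_add k41 k42) hK'0
    have hfinal : ‖g (φ + ε) - g φ - fderiv ℝ g φ ε‖ ≤
        2 * K' * (5:ℝ) ^ m₂ * (‖ε‖ ^ m₁ + ‖ε‖ ^ m₂) := by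
      calc ‖g (φ + ε) - g φ - fderiv ℝ g φ ε‖ ≤ ‖g (φ + ε) - g φ‖ + ‖fderiv ℝ g φ ε‖ := htri
        _ ≤ K' * ((5:ℝ) ^ m₂ * ‖ε‖ ^ m₁ + (5:ℝ) ^ m₂ * ‖ε‖ ^ m₂)
            + K' * ((5:ℝ) ^ m₂ * ‖ε‖ ^ m₁ + (5:ℝ) ^ m₂ * ‖ε‖ ^ m₂) := add_le_add step1 step2
        _ = 2 * K' * (5:ℝ) ^ m₂ * (‖ε‖ ^ m₁ + ‖ε‖ ^ m₂) := by ring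
    refine hfinal.trans ?_
    have hRge : ‖ε‖ ^ m₁ + ‖ε‖ ^ m₂ ≤ R := by rw [hRdef]; linarith
    have hc1 : (0:ℝ) ≤ 2 * K' * (5:ℝ) ^ m₂ := by positivity
    calc 2 * K' * (5:ℝ) ^ m₂ * (‖ε‖ ^ m₁ + ‖ε‖ ^ m₂) ≤ 2 * K' * (5:ℝ) ^ m₂ * R :=
          mul_le_mul_of_nonneg_left hRge hc1
      _ ≤ 2 * K' * (5:ℝ) ^ m₂ * R + 2 * K * (2:ℝ) ^ m₂ * R :=
          le_add_of_nonneg_right (mul_nonneg (by positivity) hR0)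
      _ = (2 * K' * (5:ℝ) ^ m₂ + 2 * K * (2:ℝ) ^ m₂) * R := by ring
  · -- Case B : 4‖ε‖ < ‖φ‖
    have hφ0 : 0 < ‖φ‖ := by linarith
    set s := Metric.ball φ (2 * ‖ε‖) with hsdef
    have hsc : Convex ℝ s := convex_ball φ _
    have hmem : ∀ z ∈ s, ‖φ‖ / 2 ≤ ‖z‖ ∧ ‖z‖ ≤ 2 * ‖φ‖ := by
      intro z hz
      have hd : ‖z - φ‖ < 2 * ‖ε‖ := by
        rwa [Metric.mem_ball, dist_eq_norm] at hz
      constructor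
      · have h1 : ‖φ‖ - ‖z‖ ≤ ‖φ - z‖ := norm_sub_norm_le _ _
        rw [norm_sub_rev] at h1
        linarith
      · have h1 : ‖z‖ - ‖φ‖ ≤ ‖z - φ‖ := norm_sub_norm_le _ _
        linarith
    have hz0 : ∀ z ∈ s, z ≠ 0 := by
      intro z hz
      have := (hmem z hz).1
      exact norm_pos_iff.mp (by linarith)
    set M : ℝ := (if 2 < m₁ then (2:ℝ) ^ m₂ * ‖φ‖ ^ (m₁ - 2) else ‖ε‖ ^ (m₁ - 2))
        + (if 2 < m₂ then (2:ℝ) ^ m₂ * ‖φ‖ ^ (m₂ - 2) else ‖ε‖ ^ (m₂ - 2)) with hMdef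
    have hMb : ∀ z ∈ s, ‖z‖ ^ (m₁ - 2) + ‖z‖ ^ (m₂ - 2) ≤ M := by
      intro z hz
      obtain ⟨hl, hr⟩ := hmem z hz
      have hzpos : 0 < ‖z‖ := by linarith
      have key : ∀ m : ℝ, 1 < m → m ≤ m₂ →
          ‖z‖ ^ (m - 2) ≤ (if 2 < m then (2:ℝ) ^ m₂ * ‖φ‖ ^ (m - 2) else ‖ε‖ ^ (m - 2)) := by
        intro m hm hmm
        split_ifs with h2
        · calc ‖z‖ ^ (m - 2) ≤ (2 * ‖φ‖) ^ (m - 2) :=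
                Real.rpow_le_rpow (norm_nonneg z) hr (by linarith)
            _ = (2:ℝ) ^ (m - 2) * ‖φ‖ ^ (m - 2) :=
                Real.mul_rpow (by norm_num) hφ0.le
            _ ≤ (2:ℝ) ^ m₂ * ‖φ‖ ^ (m - 2) := by
                have h1 : (2:ℝ) ^ (m - 2) ≤ (2:ℝ) ^ m₂ :=
                  Real.rpow_le_rpow_of_exponent_le (by norm_num) (by linarith)
                exact mul_le_mul_of_nonneg_right h1 (Real.rpow_nonneg hφ0.le _)
        · push_neg at h2
          calc ‖z‖ ^ (m - 2) ≤ (‖φ‖ / 2) ^ (m - 2) :=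
                Real.rpow_le_rpow_of_nonpos (by positivity) hl (by linarith)
            _ ≤ ‖ε‖ ^ (m - 2) :=
                Real.rpow_le_rpow_of_nonpos hε0 (by linarith) (by linarith)
      exact add_le_add (key m₁ hm₁ hm₁₂) (key m₂ hm₂ le_rfl)
    have hM0 : 0 ≤ M := by
      rw [hMdef]
      apply add_nonneg <;> split_ifs <;> positivity
    have hLip : ∀ z ∈ s, ‖fderiv ℝ g z - fderiv ℝ g φ‖ ≤ K * M * ‖z - φ‖ := by
      intro z hz
      refine hsc.norm_image_sub_le_of_norm_fderiv_le
        (fun w hw => (aux_fderiv2 hg2 (hz0 w hw)).1) (fun w hw => ?_)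
        (Metric.mem_ball_self (by positivity)) hz
      rw [(aux_fderiv2 hg2 (hz0 w hw)).2]
      exact (hD2 w (hz0 w hw)).trans (mul_le_mul_of_nonneg_left (hMb w hw) hK)
    have hεmem : φ + ε ∈ s := by
      rw [hsdef, Metric.mem_ball, dist_eq_norm, add_sub_cancel_left]
      linarith
    have hrem : ‖g (φ + ε) - g φ - (fderiv ℝ g φ) ((φ + ε) - φ)‖ ≤
        K * M * (2 * ‖ε‖) * ‖(φ + ε) - φ‖ := by
      refine hsc.norm_image_sub_le_of_norm_fderiv_le'
        (fun w _ => hg1.differentiable one_ne_zero w) (fun w hw => ?_)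
        (Metric.mem_ball_self (by positivity)) hεmem
      refine (hLip w hw).trans ?_
      have hwb : ‖w - φ‖ ≤ 2 * ‖ε‖ := by
        have : ‖w - φ‖ < 2 * ‖ε‖ := by rwa [Metric.mem_ball, dist_eq_norm] at hw
        linarith
      have := mul_le_mul_of_nonneg_left hwb (mul_nonneg hK hM0)
      linarith
    rw [add_sub_cancel_left] at hrem
    -- final arithmetic
    have hsq : ‖ε‖ ^ (2:ℝ) = ‖ε‖ * ‖ε‖ := by
      rw [show (2:ℝ) = ((2:ℕ):ℝ) by norm_num, Real.rpow_natCast]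
      ring
    have e₁ : ‖ε‖ ^ (m₁ - 2) * ‖ε‖ ^ (2:ℝ) = ‖ε‖ ^ m₁ := by
      rw [← Real.rpow_add hε0]; norm_num
    have e₂ : ‖ε‖ ^ (m₂ - 2) * ‖ε‖ ^ (2:ℝ) = ‖ε‖ ^ m₂ := by
      rw [← Real.rpow_add hε0]; norm_num
    have one_le : (1:ℝ) ≤ (2:ℝ) ^ m₂ := by
      have := Real.rpow_le_rpow_of_exponent_le (by norm_num : (1:ℝ) ≤ 2)
        (by linarith : (0:ℝ) ≤ m₂)
      rwa [Real.rpow_zero] at this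
    have hA : (0:ℝ) ≤ ‖φ‖ ^ (m₁ - 2) := Real.rpow_nonneg (norm_nonneg φ) _
    have hB : (0:ℝ) ≤ ‖φ‖ ^ (m₂ - 2) := Real.rpow_nonneg (norm_nonneg φ) _
    have hsq0 : (0:ℝ) ≤ ‖ε‖ ^ (2:ℝ) := Real.rpow_nonneg (norm_nonneg ε) _
    have t₁ : (if 2 < m₁ then (2:ℝ) ^ m₂ * ‖φ‖ ^ (m₁ - 2) else ‖ε‖ ^ (m₁ - 2)) * ‖ε‖ ^ (2:ℝ)
        ≤ (2:ℝ) ^ m₂ * ((if 2 < m₁ then ‖φ‖ ^ (m₁ - 2) * ‖ε‖ ^ (2:ℝ) else 0) + ‖ε‖ ^ m₁) := by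
      split_ifs with h
      · calc (2:ℝ) ^ m₂ * ‖φ‖ ^ (m₁ - 2) * ‖ε‖ ^ (2:ℝ)
            = (2:ℝ) ^ m₂ * (‖φ‖ ^ (m₁ - 2) * ‖ε‖ ^ (2:ℝ)) := by ring
          _ ≤ (2:ℝ) ^ m₂ * (‖φ‖ ^ (m₁ - 2) * ‖ε‖ ^ (2:ℝ) + ‖ε‖ ^ m₁) :=
              mul_le_mul_of_nonneg_left (le_add_of_nonneg_right hem₁) h2p
      · rw [e₁, zero_add]
        exact le_mul_of_one_le_left hem₁ one_le
    have t₂ : (if 2 < m₂ then (2:ℝ) ^ m₂ * ‖φ‖ ^ (m₂ - 2) else ‖ε‖ ^ (m₂ - 2)) * ‖ε‖ ^ (2:ℝ)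
        ≤ (2:ℝ) ^ m₂ * ((if 2 < m₂ then ‖φ‖ ^ (m₂ - 2) * ‖ε‖ ^ (2:ℝ) else 0) + ‖ε‖ ^ m₂) := by
      split_ifs with h
      · calc (2:ℝ) ^ m₂ * ‖φ‖ ^ (m₂ - 2) * ‖ε‖ ^ (2:ℝ)
            = (2:ℝ) ^ m₂ * (‖φ‖ ^ (m₂ - 2) * ‖ε‖ ^ (2:ℝ)) := by ring
          _ ≤ (2:ℝ) ^ m₂ * (‖φ‖ ^ (m₂ - 2) * ‖ε‖ ^ (2:ℝ) + ‖ε‖ ^ m₂) :=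
              mul_le_mul_of_nonneg_left (le_add_of_nonneg_right hem₂) h2p
      · rw [e₂, zero_add]
        exact le_mul_of_one_le_left hem₂ one_le
    have hMR : M * ‖ε‖ ^ (2:ℝ) ≤ (2:ℝ) ^ m₂ * R := by
      calc M * ‖ε‖ ^ (2:ℝ)
          = (if 2 < m₁ then (2:ℝ) ^ m₂ * ‖φ‖ ^ (m₁ - 2) else ‖ε‖ ^ (m₁ - 2)) * ‖ε‖ ^ (2:ℝ)
            + (if 2 < m₂ then (2:ℝ) ^ m₂ * ‖φ‖ ^ (m₂ - 2) else ‖ε‖ ^ (m₂ - 2)) * ‖ε‖ ^ (2:ℝ) := by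
            rw [hMdef]; ring
        _ ≤ (2:ℝ) ^ m₂ * ((if 2 < m₁ then ‖φ‖ ^ (m₁ - 2) * ‖ε‖ ^ (2:ℝ) else 0) + ‖ε‖ ^ m₁)
            + (2:ℝ) ^ m₂ * ((if 2 < m₂ then ‖φ‖ ^ (m₂ - 2) * ‖ε‖ ^ (2:ℝ) else 0) + ‖ε‖ ^ m₂) :=
            add_le_add t₁ t₂
        _ = (2:ℝ) ^ m₂ * R := by rw [hRdef]; ring
    refine hrem.trans ?_
    have heq : K * M * (2 * ‖ε‖) * ‖ε‖ = 2 * K * (M * ‖ε‖ ^ (2:ℝ)) := by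
      rw [hsq]; ring
    rw [heq]
    have step : 2 * K * (M * ‖ε‖ ^ (2:ℝ)) ≤ 2 * K * ((2:ℝ) ^ m₂ * R) := by
      have h2K : (0:ℝ) ≤ 2 * K := by linarith
      exact mul_le_mul_of_nonneg_left hMR h2K
    refine step.trans ?_
    calc 2 * K * ((2:ℝ) ^ m₂ * R) = 2 * K * (2:ℝ) ^ m₂ * R := by ring
      _ ≤ 2 * K * (2:ℝ) ^ m₂ * R + 2 * K' * (5:ℝ) ^ m₂ * R :=
          le_add_of_nonneg_right (mul_nonneg (by positivity) hR0)
      _ = (2 * K' * (5:ℝ) ^ m₂ + 2 * K * (2:ℝ) ^ m₂) * R := by ring
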